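/- Let E = {g₁,…,g_m} ⊂ G, v = Σⱼ gⱼ ⊗ δⱼ, 𝕩 = I_n ⊗ v, and for g ∈ G define A_g ∈ Mat_m(ℝ) by (A_g)_{x,y} = 1 if g_x⁻¹ g_y = g and 0 otherwise. Then for M = [m_{ij}] ∈ Mat_n(ℝG) supported on E*E = {x⁻¹y : x,y ∈ E} and P = Σ_{i,j} δ_{ij} ⊗ P^{ij} ∈ Mat_n(ℝ) ⊗ Mat_m(ℝ), the equality M = 𝕩*P𝕩 holds if and only if m_{ij}(g) = ⟨A_g, P^{ij}⟩ for all g ∈ G and all i,j, where ⟨X, Y⟩ = tr(XᵀY). -/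

import Mathlib

/-- The group-ring involution on `ℝG` determined by `g ↦ g⁻¹`. -/
noncomputable def gstar {G : Type*} [Group G] (x : MonoidAlgebra ℝ G) : MonoidAlgebra ℝ G :=
  MonoidAlgebra.ofCoeff (Finsupp.equivMapDomain (Equiv.inv G) x.coeff)

section GroupRingStar
variable {G : Type*} [Group G]

lemma gstar_single (g : G) (a : ℝ) :
    gstar (MonoidAlgebra.single g a) = MonoidAlgebra.single g⁻¹ a := by
  simp [gstar, MonoidAlgebra.ofCoeff_single, Finsupp.equivMapDomain_single]

lemma gstar_add (x y : MonoidAlgebra ℝ G) : gstar (x + y) = gstar x + gstar y :=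
  congrArg MonoidAlgebra.ofCoeff (map_add (Finsupp.domCongr (M := ℝ) (Equiv.inv G)) x.coeff y.coeff)

lemma gstar_zero : gstar (0 : MonoidAlgebra ℝ G) = 0 := by ext g; simp [gstar]

lemma gstar_gstar (x : MonoidAlgebra ℝ G) : gstar (gstar x) = x := by
  ext g; simp [gstar]

lemma gstar_mul (x y : MonoidAlgebra ℝ G) : gstar (x * y) = gstar y * gstar x := by
  induction x using MonoidAlgebra.induction_linear with
  | zero => simp [gstar_zero]
  | add f g hf hg => rw [add_mul, gstar_add, hf, hg, gstar_add, mul_add]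
  | single g a =>
    induction y using MonoidAlgebra.induction_linear with
    | zero => simp [gstar_zero]
    | add f g' hf hg => rw [mul_add, gstar_add, hf, hg, gstar_add, add_mul]
    | single h b =>
      rw [MonoidAlgebra.single_mul_single, gstar_single, gstar_single, gstar_single,
        MonoidAlgebra.single_mul_single, mul_inv_rev, mul_comm]

/-- `ℝG` as a `*`-ring, with `star` induced by `g ↦ g⁻¹`. -/
noncomputable instance groupRingStar : StarRing (MonoidAlgebra ℝ G) where
  star := gstar
  star_involutive := gstar_gstar
  star_add := gstar_add
  star_mul := gstar_mul

lemma star_of (g : G) : star (MonoidAlgebra.of ℝ G g) = MonoidAlgebra.of ℝ G g⁻¹ := by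
  show gstar _ = _
  simp [MonoidAlgebra.of_apply, gstar_single]

end GroupRingStar


/-- for `M` supported on `E*E`, the identity `M = 𝕩*P𝕩` holds if and
only if `m_{ij}(g) = ⟨A_g, P^{ij}⟩` for all `g ∈ G` and all `i, j`, where
`(A_g)_{x,y} = 1` iff `g_x⁻¹g_y = g` and `⟨X, Y⟩ = tr(XᵀY)`. -/
theorem statement17 {G : Type*} [Group G] [DecidableEq G] {n m : ℕ}
    (E : Fin m → G) (hE : Function.Injective E)
    (X : Matrix (Fin n × Fin m) (Fin n) (MonoidAlgebra ℝ G))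
    (hX : ∀ p k, X p k = if p.1 = k then MonoidAlgebra.of ℝ G (E p.2) else 0)
    (A : G → Matrix (Fin m) (Fin m) ℝ)
    (hA : ∀ (g : G) (x y : Fin m), A g x y = if (E x)⁻¹ * E y = g then 1 else 0)
    (M : Matrix (Fin n) (Fin n) (MonoidAlgebra ℝ G))
    (hsupp : ∀ (i j : Fin n) (g : G), (M i j).coeff g ≠ 0 → ∃ x y : Fin m, (E x)⁻¹ * E y = g)
    (P : Matrix (Fin n × Fin m) (Fin n × Fin m) ℝ) :
    M = X.conjTranspose * P.map (algebraMap ℝ (MonoidAlgebra ℝ G)) * X ↔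
      ∀ (g : G) (i j : Fin n),
        (M i j).coeff g = ((A g).transpose * Matrix.of fun (a b : Fin m) => P (i, a) (j, b)).trace := by
  have key : ∀ (g : G) (i j : Fin n),
      ((X.conjTranspose * P.map (algebraMap ℝ (MonoidAlgebra ℝ G)) * X) i j).coeff g =
      ((A g).transpose * Matrix.of fun (a b : Fin m) => P (i, a) (j, b)).trace := by
    intro g i j
    have hst : ∀ (p : Fin n × Fin m) (k : Fin n),
        X.conjTranspose k p = if p.1 = k then MonoidAlgebra.of ℝ G (E p.2)⁻¹ else 0 := by
      intro p k
      rw [Matrix.conjTranspose_apply, hX]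
      split
      · exact star_of _
      · exact star_zero _
    have hentry : (X.conjTranspose * P.map (algebraMap ℝ (MonoidAlgebra ℝ G)) * X) i j =
        ∑ b : Fin m, ∑ a : Fin m,
          MonoidAlgebra.single ((E a)⁻¹ * E b) (P (i, a) (j, b)) := by
      simp only [Matrix.mul_apply, Matrix.map_apply, hst, hX, Finset.sum_mul, ite_mul,
        zero_mul, mul_ite, mul_zero]
      rw [Fintype.sum_prod_type_right]
      refine Finset.sum_congr rfl fun b _ => ?_
      rw [Finset.sum_ite_eq' Finset.univ j]
      simp only [Finset.mem_univ, if_true]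
      rw [Fintype.sum_prod_type_right]
      refine Finset.sum_congr rfl fun a _ => ?_
      rw [Finset.sum_ite_eq' Finset.univ i]
      simp only [Finset.mem_univ, if_true]
      simp [MonoidAlgebra.of_apply, Algebra.algebraMap_eq_smul_one, mul_smul_comm,
        smul_mul_assoc, MonoidAlgebra.single_mul_single, MonoidAlgebra.smul_single']
    rw [hentry]
    rw [Matrix.trace]
    simp only [Matrix.diag, Matrix.mul_apply, Matrix.transpose_apply, Matrix.of_apply, hA,
      ite_mul, one_mul, zero_mul]
    rw [MonoidAlgebra.coeff_sum, Finsupp.finset_sum_apply]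
    refine Finset.sum_congr rfl fun b _ => ?_
    rw [MonoidAlgebra.coeff_sum, Finsupp.finset_sum_apply]
    refine Finset.sum_congr rfl fun a _ => ?_
    rw [MonoidAlgebra.single_apply]
  constructor
  · intro h g i j
    rw [h]
    exact key g i j
  · intro h
    ext i j g
    rw [h g i j, key g i j]
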